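/- Let N ≥ 1 be an integer and P ≥ 1 a squarefree integer. Let W_P(N) be the set of integers n with 1 ≤ n ≤ P such that (N−n)(N+n) is coprime to P. Then |W_P(N)| = ∏_{p ∣ gcd(N,P)} (p−1) · ∏_{p ∣ P, p ∤ 2N} (p−2), where the products run over prime divisors. -/

import Mathlib

open Finset

private noncomputable def cnt (N P : ℕ) : ℕ :=
  Nat.card {x : ZMod P // IsUnit (((N : ZMod P) - x) * ((N : ZMod P) + x))}

private lemma int_gcd_iff_isUnit (P : ℕ) (a : ℤ) :
    Int.gcd a (P : ℤ) = 1 ↔ IsUnit ((a : ZMod P)) := by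
  have h1 : Int.gcd a (P : ℤ) = Nat.gcd a.natAbs P := by simp [Int.gcd]
  have h2 : IsUnit ((a.natAbs : ZMod P)) ↔ Nat.gcd a.natAbs P = 1 :=
    ZMod.isUnit_iff_coprime _ _
  rw [h1, ← h2]
  rcases Int.natAbs_eq a with h | h
  · have : ((a : ZMod P)) = ((a.natAbs : ZMod P)) := by
      conv_lhs => rw [h]
      exact Int.cast_natCast _
    rw [this]
  · have : ((a : ZMod P)) = -((a.natAbs : ZMod P)) := by
      conv_lhs => rw [h]
      rw [Int.cast_neg, Int.cast_natCast]
    rw [this, IsUnit.neg_iff]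

private lemma card_eq_cnt (N P : ℕ) (hP : 1 ≤ P) :
    ((Finset.Icc 1 P).filter
        (fun n : ℕ => Int.gcd (((N : ℤ) - (n : ℤ)) * ((N : ℤ) + (n : ℤ))) (P : ℤ) = 1)).card
      = cnt N P := by
  haveI : NeZero P := ⟨by omega⟩
  have hcast : ∀ n : ℕ, ((((N : ℤ) - (n : ℤ)) * ((N : ℤ) + (n : ℤ)) : ℤ) : ZMod P)
      = ((N : ZMod P) - (n : ZMod P)) * ((N : ZMod P) + (n : ZMod P)) := by
    intro n; push_cast; ring
  have key : ∀ n : ℕ, Int.gcd (((N : ℤ) - (n : ℤ)) * ((N : ℤ) + (n : ℤ))) (P : ℤ) = 1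
      ↔ IsUnit (((N : ZMod P) - (n : ZMod P)) * ((N : ZMod P) + (n : ZMod P))) := by
    intro n; rw [int_gcd_iff_isUnit, hcast]
  rw [cnt, Nat.card_eq_fintype_card, Fintype.card_subtype]
  refine Finset.card_bij' (fun n _ => (n : ZMod P))
    (fun x _ => if x = 0 then P else x.val) ?_ ?_ ?_ ?_
  · intro n hn
    simp only [Finset.mem_filter, Finset.mem_univ, true_and]
    exact (key n).mp (Finset.mem_filter.mp hn).2
  · intro x hx
    simp only [Finset.mem_filter, Finset.mem_univ, true_and] at hx
    have hjx : (((if x = 0 then P else x.val) : ℕ) : ZMod P) = x := by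
      split_ifs with h
      · simp [h]
      · exact ZMod.natCast_rightInverse x
    refine Finset.mem_filter.mpr ⟨?_, ?_⟩
    · simp only [Finset.mem_Icc]
      split_ifs with h
      · omega
      · have h1 : x.val ≠ 0 := fun hv => h (by
          have := ZMod.natCast_rightInverse x
          rw [hv] at this; simpa using this.symm)
        have h2 : x.val < P := ZMod.val_lt x
        omega
    · rw [key, hjx]; exact hx
  · intro n hn
    simp only [Finset.mem_filter, Finset.mem_Icc] at hn
    split_ifs with h
    · have h2 : P ∣ n := (ZMod.natCast_eq_zero_iff n P).mp h
      have h3 : P ≤ n := Nat.le_of_dvd (by omega) h2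
      omega
    · have hlt : n < P := by
        rcases lt_or_eq_of_le hn.1.2 with h' | h'
        · exact h'
        · exact absurd (by simp [h']) h
      exact ZMod.val_cast_of_lt hlt
  · intro x hx
    split_ifs with h
    · simp [h]
    · exact ZMod.natCast_rightInverse x

private lemma prod_isUnit_iff {M N : Type*} [CommMonoid M] [CommMonoid N] (p : M × N) :
    IsUnit p ↔ IsUnit p.1 ∧ IsUnit p.2 := by
  constructor
  · intro h
    exact ⟨h.map (MonoidHom.fst M N), h.map (MonoidHom.snd M N)⟩
  · rintro ⟨h1, h2⟩
    obtain ⟨u, hu⟩ := isUnit_iff_exists_inv.mp h1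
    obtain ⟨v, hv⟩ := isUnit_iff_exists_inv.mp h2
    exact isUnit_iff_exists_inv.mpr ⟨(u, v), Prod.ext hu hv⟩

private lemma cnt_mul (N a b : ℕ) (hab : Nat.Coprime a b) :
    cnt N (a * b) = cnt N a * cnt N b := by
  let e := ZMod.chineseRemainder hab
  have hcond : ∀ x : ZMod (a * b),
      IsUnit (((N : ZMod (a * b)) - x) * ((N : ZMod (a * b)) + x)) ↔
      (IsUnit (((N : ZMod a) - (e x).1) * ((N : ZMod a) + (e x).1)) ∧
       IsUnit (((N : ZMod b) - (e x).2) * ((N : ZMod b) + (e x).2))) := by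
    intro x
    have hmap : e (((N : ZMod (a * b)) - x) * ((N : ZMod (a * b)) + x))
        = ((((N : ZMod a) - (e x).1) * ((N : ZMod a) + (e x).1)),
           (((N : ZMod b) - (e x).2) * ((N : ZMod b) + (e x).2))) := by
      rw [map_mul, map_sub, map_add, map_natCast]
      rfl
    constructor
    · intro h
      have h2 := h.map e.toRingHom
      have h3 : IsUnit (e (((N : ZMod (a * b)) - x) * ((N : ZMod (a * b)) + x))) := h2
      rw [hmap] at h3
      exact (prod_isUnit_iff _).mp h3
    · rintro ⟨h1, h2⟩
      have h3 : IsUnit (e (((N : ZMod (a * b)) - x) * ((N : ZMod (a * b)) + x))) := by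
        rw [hmap]; exact (prod_isUnit_iff _).mpr ⟨h1, h2⟩
      have h4 := h3.map e.symm.toRingHom
      simpa using h4
  have hkey : Nat.card {x : ZMod (a * b) //
        IsUnit (((N : ZMod (a * b)) - x) * ((N : ZMod (a * b)) + x))}
      = Nat.card {y : ZMod a × ZMod b //
        IsUnit (((N : ZMod a) - y.1) * ((N : ZMod a) + y.1)) ∧
        IsUnit (((N : ZMod b) - y.2) * ((N : ZMod b) + y.2))} :=
    Nat.card_congr (e.toEquiv.subtypeEquiv hcond)
  rw [cnt, cnt, cnt, hkey, Nat.card_congr (Equiv.subtypeProdEquivProd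
    (p := fun x : ZMod a => IsUnit (((N : ZMod a) - x) * ((N : ZMod a) + x)))
    (q := fun x : ZMod b => IsUnit (((N : ZMod b) - x) * ((N : ZMod b) + x)))),
    Nat.card_prod]

private lemma cnt_one (N : ℕ) : cnt N 1 = 1 := by
  have h : ∀ x : ZMod 1, IsUnit (((N : ZMod 1) - x) * ((N : ZMod 1) + x)) := fun x =>
    IsUnit.of_mul_eq_one 1 (Subsingleton.elim _ _)
  rw [cnt, Nat.card_congr (Equiv.subtypeUnivEquiv h), Nat.card_eq_fintype_card, ZMod.card]

private lemma cnt_prime (N p : ℕ) (hp : p.Prime) :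
    cnt N p = if p ∣ N then p - 1 else if p = 2 then 1 else p - 2 := by
  haveI : Fact p.Prime := ⟨hp⟩
  rw [cnt, Nat.card_eq_fintype_card, Fintype.card_subtype]
  have hU : ∀ x : ZMod p, IsUnit (((N : ZMod p) - x) * ((N : ZMod p) + x)) ↔
      x ≠ (N : ZMod p) ∧ x ≠ -(N : ZMod p) := by
    intro x
    rw [isUnit_iff_ne_zero, mul_ne_zero_iff, sub_ne_zero]
    constructor
    · rintro ⟨h1, h2⟩
      refine ⟨fun h => h1 h.symm, fun h => h2 ?_⟩
      rw [h]; ring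
    · rintro ⟨h1, h2⟩
      refine ⟨fun h => h1 h.symm, fun h => ?_⟩
      have : x = -(N : ZMod p) := by linear_combination h
      exact h2 this
  have hset : (Finset.univ.filter fun x : ZMod p =>
      IsUnit (((N : ZMod p) - x) * ((N : ZMod p) + x)))
      = Finset.univ \ {(N : ZMod p), -(N : ZMod p)} := by
    ext x
    rw [Finset.mem_filter, Finset.mem_sdiff, hU x]
    simp [not_or]
  rw [hset, Finset.card_sdiff_of_subset (Finset.subset_univ _), Finset.card_univ, ZMod.card]
  by_cases hdvd : p ∣ N
  · rw [if_pos hdvd]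
    have h0 : (N : ZMod p) = 0 := (ZMod.natCast_eq_zero_iff N p).mpr hdvd
    rw [h0]
    norm_num
  · rw [if_neg hdvd]
    by_cases h2 : p = 2
    · rw [if_pos h2]
      subst h2
      have hneg : -(N : ZMod 2) = (N : ZMod 2) := ZMod.neg_eq_self_mod_two _
      rw [hneg, Finset.insert_eq_self.mpr (Finset.mem_singleton_self _), Finset.card_singleton]
    · rw [if_neg h2]
      have hne : (N : ZMod p) ≠ -(N : ZMod p) := by
        intro h
        have h2N : ((2 * N : ℕ) : ZMod p) = 0 := by push_cast; linear_combination h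
        have := (ZMod.natCast_eq_zero_iff (2 * N) p).mp h2N
        rcases (Nat.Prime.dvd_mul hp).mp this with h' | h'
        · exact h2 ((Nat.prime_dvd_prime_iff_eq hp Nat.prime_two).mp h')
        · exact hdvd h'
      rw [Finset.card_insert_of_notMem (by simpa using hne), Finset.card_singleton]

private lemma cnt_prod (N : ℕ) : ∀ P : ℕ, Squarefree P →
    cnt N P = ∏ p ∈ P.primeFactors, cnt N p := by
  intro P
  induction P using Nat.strong_induction_on with
  | _ P ih =>
    intro hsq
    by_cases h1 : P = 1
    · subst h1; simp [cnt_one]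
    · have hP0 : P ≠ 0 := hsq.ne_zero
      have hP1 : 1 < P := by omega
      set p := P.minFac with hpdef
      have hp : p.Prime := Nat.minFac_prime h1
      obtain ⟨Q, hQ⟩ := Nat.minFac_dvd P
      have hQ0 : Q ≠ 0 := by rintro rfl; simp at hQ; exact hP0 hQ
      have hsq' : Squarefree Q := hsq.squarefree_of_dvd ⟨p, by rw [hQ]; ring⟩
      have hcop : Nat.Coprime p Q := by
        rw [Nat.Prime.coprime_iff_not_dvd hp]
        intro hdQ
        obtain ⟨k, hk⟩ := hdQ
        have : p * p ∣ P := ⟨k, by rw [hQ, hk]; ring⟩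
        exact hp.one_lt.ne' (Nat.isUnit_iff.mp (hsq p this))
      have hQlt : Q < P := by
        have h2 : 2 ≤ p := hp.two_le
        calc Q < 2 * Q := by omega
        _ ≤ p * Q := Nat.mul_le_mul_right Q h2
        _ = P := hQ.symm
      rw [hQ, cnt_mul N p Q hcop, ih Q hQlt hsq',
        Nat.Coprime.primeFactors_mul hcop,
        Finset.prod_union (Nat.Coprime.disjoint_primeFactors hcop),
        Nat.Prime.primeFactors hp, Finset.prod_singleton]

theorem stmt_1 (N P : ℕ) (hN : 1 ≤ N) (hP : 1 ≤ P) (hsq : Squarefree P) :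
    ((Finset.Icc 1 P).filter
        (fun n : ℕ => Int.gcd (((N : ℤ) - (n : ℤ)) * ((N : ℤ) + (n : ℤ))) (P : ℤ) = 1)).card
      = (∏ p ∈ (Nat.gcd N P).primeFactors, (p - 1)) *
        ∏ p ∈ P.primeFactors.filter (fun p => ¬ p ∣ 2 * N), (p - 2) := by
  have hN0 : N ≠ 0 := by omega
  have hP0 : P ≠ 0 := by omega
  rw [card_eq_cnt N P hP, cnt_prod N P hsq]
  have hstep1 : ∏ p ∈ P.primeFactors, cnt N p
      = ∏ p ∈ P.primeFactors, (if p ∣ N then p - 1 else if p = 2 then 1 else p - 2) :=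
    Finset.prod_congr rfl fun p hp => cnt_prime N p (Nat.prime_of_mem_primeFactors hp)
  rw [hstep1, ← Finset.prod_filter_mul_prod_filter_not P.primeFactors (fun p => p ∣ N)]
  congr 1
  · -- part with p ∣ N
    rw [Finset.prod_congr rfl (fun p hp => if_pos (Finset.mem_filter.mp hp).2)]
    apply Finset.prod_congr _ (fun _ _ => rfl)
    rw [Nat.primeFactors_gcd hN0 hP0]
    ext q
    simp only [Finset.mem_filter, Finset.mem_inter, Nat.mem_primeFactors]
    tauto
  · -- part with ¬ p ∣ N
    have hcongr : ∀ p ∈ P.primeFactors.filter (fun p => ¬ p ∣ N),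
        (if p ∣ N then p - 1 else if p = 2 then 1 else p - 2)
          = (if p ∣ 2 * N then 1 else p - 2) := by
      intro p hp
      obtain ⟨hpf, hnd⟩ := Finset.mem_filter.mp hp
      have hprime := Nat.prime_of_mem_primeFactors hpf
      rw [if_neg hnd]
      have : p = 2 ↔ p ∣ 2 * N := by
        constructor
        · rintro rfl; exact Dvd.dvd.mul_right (dvd_refl 2) N
        · intro h
          rcases (Nat.Prime.dvd_mul hprime).mp h with h' | h'
          · exact (Nat.prime_dvd_prime_iff_eq hprime Nat.prime_two).mp h'
          · exact absurd h' hnd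
      by_cases h2 : p = 2
      · rw [if_pos h2, if_pos (this.mp h2)]
      · rw [if_neg h2, if_neg (fun h => h2 (this.mpr h))]
    rw [Finset.prod_congr rfl hcongr,
      ← Finset.prod_filter_mul_prod_filter_not
        (P.primeFactors.filter (fun p => ¬ p ∣ N)) (fun p => p ∣ 2 * N)]
    have hone : ∏ p ∈ (P.primeFactors.filter (fun p => ¬ p ∣ N)).filter (fun p => p ∣ 2 * N),
        (if p ∣ 2 * N then 1 else p - 2) = 1 :=
      Finset.prod_eq_one fun p hp => if_pos (Finset.mem_filter.mp hp).2
    rw [hone, one_mul]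
    rw [Finset.prod_congr rfl (fun p hp => if_neg (Finset.mem_filter.mp hp).2)]
    apply Finset.prod_congr _ (fun _ _ => rfl)
    rw [Finset.filter_filter]
    apply Finset.filter_congr
    intro p hp
    constructor
    · tauto
    · intro h
      exact ⟨fun hd => h (Dvd.dvd.mul_left hd 2), h⟩
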